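/- Let r be a real number with 0 < r < 1/2. Then the function f(y) = √( (r + y)² · ( y·(1 − 4r²) − 8r³ ) / y ) is concave on the interval [ 8r³/(1 − 4r²), ∞ ). -/

import Mathlib

open Real Set Filter

theorem inradius_boundary_concave (r : ℝ) (hr₀ : 0 < r) (hr₁ : r < 1 / 2) :
    ConcaveOn ℝ (Set.Ici (8 * r ^ 3 / (1 - 4 * r ^ 2)))
      (fun y : ℝ => Real.sqrt ((r + y) ^ 2 * (y * (1 - 4 * r ^ 2) - 8 * r ^ 3) / y)) := by
  have hc : 0 < 1 - 4 * r ^ 2 := by nlinarith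
  set c : ℝ := 1 - 4 * r ^ 2 with hcdef
  set b : ℝ := 8 * r ^ 3 with hbdef
  have hb : 0 < b := by positivity
  set a : ℝ := b / c with hadef
  have ha : 0 < a := by positivity
  set s : ℝ → ℝ := fun y => Real.sqrt (c - b / y) with hsdef
  have hypos : ∀ y : ℝ, y ∈ Ici a → 0 < y := fun y hy => lt_of_lt_of_le ha hy
  have hupos : ∀ y : ℝ, y ∈ Ioi a → 0 < c - b / y := by
    intro y hy
    have hy0 : 0 < y := lt_trans ha hy
    rw [sub_pos, div_lt_iff₀ hy0]
    have : a * c < y * c := by nlinarith [mem_Ioi.mp hy]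
    rw [hadef, div_mul_cancel₀ _ (ne_of_gt hc)] at this
    linarith [mul_comm y c]
  have hspos : ∀ y : ℝ, y ∈ Ioi a → 0 < s y := fun y hy => Real.sqrt_pos.mpr (hupos y hy)
  -- the target function equals (r+y) * s y on Ici a
  have heq : ∀ y ∈ Ici a, Real.sqrt ((r + y) ^ 2 * (y * c - b) / y) = (r + y) * s y := by
    intro y hy
    have hy0 := hypos y hy
    have hry : 0 ≤ r + y := by positivity
    have harg : (y * c - b) / y = c - b / y := by field_simp
    rw [show (r + y) ^ 2 * (y * c - b) / y = (r + y) ^ 2 * ((y * c - b) / y) by ring,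
      Real.sqrt_mul (sq_nonneg _), Real.sqrt_sq hry, harg]
  -- derivative of s
  have hs' : ∀ y ∈ Ioi a, HasDerivAt s (b / (2 * y ^ 2 * s y)) y := by
    intro y hy
    have hy0 : 0 < y := lt_trans ha hy
    have hu := hupos y hy
    have hinner : HasDerivAt (fun y : ℝ => c - b / y) (b / y ^ 2) y := by
      simp only [div_eq_mul_inv]
      have h1 : HasDerivAt (fun y : ℝ => y⁻¹) (-(y ^ 2)⁻¹) y := hasDerivAt_inv (ne_of_gt hy0)
      have h2 := (h1.const_mul b).const_sub c
      refine h2.congr_deriv ?_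
      ring
    have h3 := hinner.sqrt (ne_of_gt hu)
    convert h3 using 1
    have : (0:ℝ) < Real.sqrt (c - b / y) := Real.sqrt_pos.mpr hu
    rw [hsdef]
    field_simp
  -- derivative of (r+y) * s y
  set g1 : ℝ → ℝ := fun y => s y + b * (r + y) / (2 * y ^ 2 * s y) with hg1def
  have hg : ∀ y ∈ Ioi a, HasDerivAt (fun y => (r + y) * s y) (g1 y) y := by
    intro y hy
    have hy0 : 0 < y := lt_trans ha hy
    have hsy := hspos y hy
    have h1 : HasDerivAt (fun y : ℝ => r + y) 1 y := (hasDerivAt_id y).const_add r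
    have h2 := h1.mul (hs' y hy)
    refine h2.congr_deriv ?_
    rw [hg1def]
    field_simp
  -- derivative of g1
  have hg1 : ∀ y ∈ Ioi a,
      HasDerivAt g1 ((-(4 * b * y * r * (s y) ^ 2) - b ^ 2 * (r + y)) / (4 * y ^ 4 * (s y) ^ 3)) y := by
    intro y hy
    have hy0 : 0 < y := lt_trans ha hy
    have hsy := hspos y hy
    have hn : HasDerivAt (fun y : ℝ => b * (r + y)) b y := by
      have h1 : HasDerivAt (fun y : ℝ => r + y) 1 y := (hasDerivAt_id y).const_add r
      simpa using h1.const_mul b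
    have hd : HasDerivAt (fun y : ℝ => 2 * y ^ 2 * s y)
        (4 * y * s y + 2 * y ^ 2 * (b / (2 * y ^ 2 * s y))) y := by
      have h1 : HasDerivAt (fun y : ℝ => 2 * y ^ 2) (4 * y) y := by
        have := (hasDerivAt_pow 2 y).const_mul (2:ℝ)
        refine this.congr_deriv ?_
        push_cast
        ring
      have h2 := h1.mul (hs' y hy)
      exact h2
    have hdne : 2 * y ^ 2 * s y ≠ 0 := by positivity
    have hq := hn.div hd hdne
    have h3 := (hs' y hy).add hq
    refine h3.congr_deriv ?_
    field_simp
    ring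
  -- main application
  apply StrictConcaveOn.concaveOn
  apply strictConcaveOn_of_deriv2_neg (convex_Ici a)
  · apply ContinuousOn.sqrt
    apply ContinuousOn.div
    · exact ((((continuous_const.add continuous_id).pow 2).mul
        ((continuous_id.mul continuous_const).sub continuous_const)).continuousOn)
    · exact continuousOn_id
    · intro y hy
      exact ne_of_gt (hypos y hy)
  · intro y hy
    rw [interior_Ici] at hy
    have hy0 : 0 < y := lt_trans ha hy
    have hsy := hspos y hy
    set F : ℝ → ℝ := fun y : ℝ => Real.sqrt ((r + y) ^ 2 * (y * c - b) / y) with hFdef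
    have hFg : ∀ z ∈ Ioi a, deriv F z = g1 z := by
      intro z hz
      have hev : F =ᶠ[nhds z] fun y => (r + y) * s y :=
        eventuallyEq_of_mem (isOpen_Ioi.mem_nhds hz) fun w hw => heq w (mem_Ici.mpr (le_of_lt (mem_Ioi.mp hw)))
      exact (((hg z hz).congr_of_eventuallyEq hev)).deriv
    have hev2 : deriv F =ᶠ[nhds y] g1 :=
      eventuallyEq_of_mem (isOpen_Ioi.mem_nhds hy) hFg
    have : deriv (deriv F) y = deriv g1 y := hev2.deriv_eq
    show deriv (deriv F) y < 0
    rw [this, (hg1 y hy).deriv]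
    apply div_neg_of_neg_of_pos
    · have h1 : 0 < 4 * b * y * r * (s y) ^ 2 := by positivity
      have h2 : 0 < b ^ 2 * (r + y) := by positivity
      linarith
    · positivity
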